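/- arXiv:2210.01962 — 6 statements merged into one kernel-verified Lean document; each statement's English description precedes it below -/
import Mathlib

section
/- The join of posets preserves the property of having no full embedding of Z: if posets P and Q each admit no full order embedding of the zigzag poset Z, then neither does P ⋈ Q. -/
open scoped NNReal

/-- The join of two posets: underlying set the disjoint union, with every
element of the first below every element of the second. -/
def Join (α β : Type) : Type := α ⊕ β

/-- Package a sum element as an element of the join. -/
def Join.mk {α β : Type} : α ⊕ β → Join α β := id

/-- Unpack an element of the join. -/
def Join.out {α β : Type} : Join α β → α ⊕ β := id

/-- The order relation of the join. -/
def joinLE {α β : Type} [LE α] [LE β] : α ⊕ β → α ⊕ β → Prop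
  | .inl a, .inl a' => a ≤ a'
  | .inr b, .inr b' => b ≤ b'
  | .inl _, .inr _ => True
  | .inr _, .inl _ => False

instance Join.instPartialOrder {α β : Type} [PartialOrder α] [PartialOrder β] :
    PartialOrder (Join α β) where
  le x y := joinLE (Join.out x) (Join.out y)
  le_refl x := by rcases hx : Join.out x with a | b <;> simp [hx, joinLE]
  le_trans x y z hxy hyz := by
    rcases hx : Join.out x with a | a <;> rcases hy : Join.out y with b | b <;>
      rcases hz : Join.out z with c | c <;>
      simp_all [joinLE] <;> exact le_trans hxy hyz
  le_antisymm x y hxy hyx := by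
    have : Join.out x = Join.out y := by
      rcases hx : Join.out x with a | a <;> rcases hy : Join.out y with b | b <;>
        simp_all [joinLE] <;> exact le_antisymm hxy hyx
    exact this

/-- The disjoint-union partial order on a sum type (no cross relations). -/
def disjOrder (α β : Type) [PartialOrder α] [PartialOrder β] : PartialOrder (α ⊕ β) :=
  inferInstance

/-- The class of expressible posets: generated from empty and singleton posets by
disjoint unions and joins, closed under order isomorphism. -/
inductive Expressible : ∀ (α : Type), PartialOrder α → Prop
  | empty (α : Type) [IsEmpty α] (o : PartialOrder α) : Expressible α o
  | single (α : Type) [Unique α] (o : PartialOrder α) : Expressible α o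
  | disj {α β : Type} [oa : PartialOrder α] [ob : PartialOrder β] :
      Expressible α oa → Expressible β ob → Expressible (α ⊕ β) (disjOrder α β)
  | join {α β : Type} [oa : PartialOrder α] [ob : PartialOrder β] :
      Expressible α oa → Expressible β ob → Expressible (Join α β) Join.instPartialOrder
  | iso {α β : Type} (oa : PartialOrder α) (ob : PartialOrder β) (e : α ≃ β)
      (he : ∀ x y, oa.le x y ↔ ob.le (e x) (e y)) :
      Expressible α oa → Expressible β ob

/-- The order relation of the zigzag poset `Z` on four elements `0,1,2,3`
(thought of as `a,b,c,d`): exactly `a < b`, `c < b`, `c < d`. -/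
abbrev ZLE : Fin 4 → Fin 4 → Prop := fun x y =>
  x = y ∨ (x = 0 ∧ y = 1) ∨ (x = 2 ∧ y = 1) ∨ (x = 2 ∧ y = 3)

theorem ZLE.refl : ∀ a, ZLE a a := by decide
theorem ZLE.trans : ∀ a b c, ZLE a b → ZLE b c → ZLE a c := by decide
theorem ZLE.antisymm : ∀ a b, ZLE a b → ZLE b a → a = b := by decide

/-- The zigzag poset `Z`. -/
def ZOrder : PartialOrder (Fin 4) where
  le := ZLE
  lt a b := ZLE a b ∧ ¬ ZLE b a
  lt_iff_le_not_ge _ _ := Iff.rfl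
  le_refl := ZLE.refl
  le_trans := ZLE.trans
  le_antisymm := ZLE.antisymm

/-- A poset admits no full embedding of the zigzag `Z`: there is no injective map
from `Z` that both preserves and reflects the order. -/
def NoZFullEmbedding (α : Type) [PartialOrder α] : Prop :=
  ¬ ∃ f : Fin 4 → α, Function.Injective f ∧ ∀ x y : Fin 4, ZLE x y ↔ f x ≤ f y

/-- Lexicographic substitution of the posets `Q i` into the poset `P`. -/
def SubstOrder {ι : Type} (P : PartialOrder ι) {β : ι → Type}
    (Q : ∀ i, PartialOrder (β i)) : PartialOrder (Σ i, β i) :=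
  letI := P
  letI : ∀ i, PartialOrder (β i) := Q
  inferInstanceAs (PartialOrder (Σₗ i, β i))

/-- The tropical dependence operation: maximal chain-sum of weights over a poset. -/
noncomputable def tropBox {ι : Type} (P : PartialOrder ι) (a : ι → ℝ≥0) : ℝ≥0 :=
  sSup {s : ℝ≥0 | ∃ l : List ι, l.Chain' (fun i j => P.lt i j) ∧ s = (l.map a).sum}

/-- The discrete partial order. -/
def discreteOrder (ι : Type) : PartialOrder ι where
  le x y := x = y
  le_refl _ := rfl
  le_trans _ _ _ h h' := Eq.trans h h'
  le_antisymm _ _ h _ := h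

/-- Connectivity of a poset: any two elements are joined by a zigzag of comparisons. -/
def PosetConnected (α : Type) [PartialOrder α] : Prop :=
  ∀ x y : α, Relation.ReflTransGen (fun u v : α => u ≤ v ∨ v ≤ u) x y

lemma join_le_iff {α β : Type} [PartialOrder α] [PartialOrder β]
    (x y : Join α β) : x ≤ y ↔ joinLE (Join.out x) (Join.out y) := Iff.rfl

lemma allLeft_contra {α β : Type} [PartialOrder α] [PartialOrder β]
    (ha : NoZFullEmbedding α) (f : Fin 4 → Join α β)
    (hinj : Function.Injective f) (hf : ∀ x y : Fin 4, ZLE x y ↔ f x ≤ f y)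
    (hl : ∀ i, (Join.out (f i)).isLeft) : False := by
  have hrep : ∀ i, Sum.inl ((Join.out (f i)).getLeft (hl i)) = f i := fun i =>
    Sum.inl_getLeft _ _
  apply ha
  refine ⟨fun i => (Join.out (f i)).getLeft (hl i), ?_, ?_⟩
  · intro i j hij
    apply hinj
    rw [← hrep i, ← hrep j]; exact congrArg _ hij
  · intro x y
    rw [hf x y, join_le_iff, ← hrep x, ← hrep y]
    exact Iff.rfl

lemma allRight_contra {α β : Type} [PartialOrder α] [PartialOrder β]
    (hb : NoZFullEmbedding β) (f : Fin 4 → Join α β)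
    (hinj : Function.Injective f) (hf : ∀ x y : Fin 4, ZLE x y ↔ f x ≤ f y)
    (hr : ∀ i, (Join.out (f i)).isRight) : False := by
  have hrep : ∀ i, Sum.inr ((Join.out (f i)).getRight (hr i)) = f i := fun i =>
    Sum.inr_getRight _ _
  apply hb
  refine ⟨fun i => (Join.out (f i)).getRight (hr i), ?_, ?_⟩
  · intro i j hij
    apply hinj
    rw [← hrep i, ← hrep j]; exact congrArg _ hij
  · intro x y
    rw [hf x y, join_le_iff, ← hrep x, ← hrep y]
    exact Iff.rfl

/-- The join of posets preserves having no full embedding of the zigzag `Z`. -/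
theorem noZ_join {α β : Type} [PartialOrder α] [PartialOrder β]
    (ha : NoZFullEmbedding α) (hb : NoZFullEmbedding β) :
    NoZFullEmbedding (Join α β) := by
  rintro ⟨f, hinj, hf⟩
  -- incomparable elements of Z must land on the same side of the join
  have same : ∀ x y : Fin 4, ¬ ZLE x y → ¬ ZLE y x →
      ((Join.out (f x)).isLeft ↔ (Join.out (f y)).isLeft) := by
    intro x y h1 h2
    rcases hx : Join.out (f x) with a | a <;> rcases hy : Join.out (f y) with b | b <;> simp
    · exact h1 ((hf x y).mpr (by rw [join_le_iff, hx, hy]; trivial))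
    · exact h2 ((hf y x).mpr (by rw [join_le_iff, hx, hy]; trivial))
  have s02 := same 0 2 (by decide) (by decide)
  have s03 := same 0 3 (by decide) (by decide)
  have s13 := same 1 3 (by decide) (by decide)
  by_cases h0 : (Join.out (f 0)).isLeft
  · refine allLeft_contra ha f hinj hf ?_
    intro i
    fin_cases i
    · exact h0
    · exact s13.mpr (s03.mp h0)
    · exact s02.mp h0
    · exact s03.mp h0
  · refine allRight_contra hb f hinj hf ?_
    have h0' := (Sum.not_isLeft).mp h0
    intro i
    rw [← Sum.not_isLeft]
    fin_cases i
    · exact h0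
    · intro h; exact h0 (s03.mpr (s13.mp h))
    · intro h; exact h0 (s02.mpr h)
    · intro h; exact h0 (s03.mpr h)
end

section
/- Every expressible finite poset admits no full order embedding of the zigzag poset Z. -/
open scoped NNReal

lemma noZ_sum {α β : Type} [PartialOrder α] [PartialOrder β]
    (c : Prop)
    (r : α ⊕ β → α ⊕ β → Prop)
    (hll : ∀ a a', r (.inl a) (.inl a') ↔ a ≤ a')
    (hrr : ∀ b b', r (.inr b) (.inr b') ↔ b ≤ b')
    (hlr : ∀ a b, r (.inl a) (.inr b) ↔ c)
    (hrl : ∀ b a, ¬ r (.inr b) (.inl a))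
    (ha : NoZFullEmbedding α) (hb : NoZFullEmbedding β)
    (f : Fin 4 → α ⊕ β) (hinj : Function.Injective f)
    (hord : ∀ x y, ZLE x y ↔ r (f x) (f y)) : False := by
  have h01 : r (f 0) (f 1) := (hord 0 1).mp (by decide)
  have h21 : r (f 2) (f 1) := (hord 2 1).mp (by decide)
  have h23 : r (f 2) (f 3) := (hord 2 3).mp (by decide)
  have n02 : ¬ r (f 0) (f 2) := fun h => absurd ((hord 0 2).mpr h) (by decide)
  have n20 : ¬ r (f 2) (f 0) := fun h => absurd ((hord 2 0).mpr h) (by decide)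
  have n03 : ¬ r (f 0) (f 3) := fun h => absurd ((hord 0 3).mpr h) (by decide)
  have n30 : ¬ r (f 3) (f 0) := fun h => absurd ((hord 3 0).mpr h) (by decide)
  have n13 : ¬ r (f 1) (f 3) := fun h => absurd ((hord 1 3).mpr h) (by decide)
  have n31 : ¬ r (f 3) (f 1) := fun h => absurd ((hord 3 1).mpr h) (by decide)
  have key : (∃ g : Fin 4 → α, ∀ i, f i = Sum.inl (g i)) ∨
      (∃ g : Fin 4 → β, ∀ i, f i = Sum.inr (g i)) := by
    by_cases hc : c <;>
    · rcases e0 : f 0 with a0 | b0 <;> rcases e1 : f 1 with a1 | b1 <;>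
        rcases e2 : f 2 with a2 | b2 <;> rcases e3 : f 3 with a3 | b3 <;>
        rw [e0, e1] at h01 <;> rw [e2, e1] at h21 <;> rw [e2, e3] at h23 <;>
        rw [e0, e2] at n02 <;> rw [e2, e0] at n20 <;> rw [e0, e3] at n03 <;>
        rw [e3, e0] at n30 <;> rw [e1, e3] at n13 <;> rw [e3, e1] at n31 <;>
        simp only [hll, hrr, hlr, hrl, hc, not_true, not_false_iff, not_true_eq_false, not_false_eq_true, iff_true, iff_false] at h01 h21 h23 n02 n20 n03 n30 n13 n31 <;>
        first
        | exact h01.elim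
        | exact h21.elim
        | exact h23.elim
        | exact n02.elim
        | exact n20.elim
        | exact n03.elim
        | exact n30.elim
        | exact n13.elim
        | exact n31.elim
        | (left
           refine ⟨![a0, a1, a2, a3], ?_⟩
           intro i
           fin_cases i <;> simp [e0, e1, e2, e3])
        | (right
           refine ⟨![b0, b1, b2, b3], ?_⟩
           intro i
           fin_cases i <;> simp [e0, e1, e2, e3])
  rcases key with ⟨g, hg⟩ | ⟨g, hg⟩
  · exact ha ⟨g, fun i j hij => hinj (by rw [hg i, hg j, hij]),
      fun x y => by rw [hord x y, hg x, hg y, hll]⟩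
  · exact hb ⟨g, fun i j hij => hinj (by rw [hg i, hg j, hij]),
      fun x y => by rw [hord x y, hg x, hg y, hrr]⟩

/-- Every expressible poset admits no full embedding of the zigzag `Z`. -/
theorem expressible_noZ {α : Type} {o : PartialOrder α} (h : Expressible α o) :
    @NoZFullEmbedding α o := by
  induction h with
  | empty α o =>
    rintro ⟨f, -, -⟩
    exact (IsEmpty.false (f 0))
  | single α o =>
    rintro ⟨f, hinj, -⟩
    exact absurd (hinj (Subsingleton.elim (f 0) (f 1))) (by decide)
  | disj ha hb iha ihb =>
    rintro ⟨f, hinj, hord⟩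
    exact noZ_sum False (· ≤ ·) (fun _ _ => Sum.inl_le_inl_iff)
      (fun _ _ => Sum.inr_le_inr_iff)
      (fun _ _ => iff_of_false Sum.not_inl_le_inr not_false)
      (fun _ _ => Sum.not_inr_le_inl) iha ihb f hinj hord
  | join ha hb iha ihb =>
    rintro ⟨f, hinj, hord⟩
    exact noZ_sum True joinLE (fun _ _ => Iff.rfl) (fun _ _ => Iff.rfl)
      (fun _ _ => Iff.rfl) (fun _ _ => not_false) iha ihb
      (fun i => Join.out (f i)) (fun i j hij => hinj hij)
      (fun x y => hord x y)
  | iso oa ob e he ha ih =>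
    rintro ⟨f, hinj, hord⟩
    refine ih ⟨fun i => e.symm (f i), fun i j hij => hinj (by
      have := congrArg e hij
      simpa using this), fun x y => ?_⟩
    rw [hord x y, he (e.symm (f x)) (e.symm (f y)), e.apply_symm_apply,
      e.apply_symm_apply]
end

section
/- Every finite poset with no full embedding of the zigzag poset Z is expressible. -/
open scoped NNReal

/-! ### Auxiliary graph-theoretic development (Seinsche's theorem) -/

namespace NoZAux

open Relation
variable {V : Type}

def HasP4 (adj : V → V → Prop) : Prop :=
  ∃ a b c d : V, adj a b ∧ adj b c ∧ adj c d ∧ ¬ adj a c ∧ ¬ adj a d ∧ ¬ adj b d ∧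
    a ≠ c ∧ a ≠ d ∧ b ≠ d

def gcompl (adj : V → V → Prop) : V → V → Prop := fun x y => x ≠ y ∧ ¬ adj x y

def Preconn (adj : V → V → Prop) : Prop := ∀ x y : V, ReflTransGen adj x y

lemma gcompl_symm {adj : V → V → Prop} (hs : Symmetric adj) : Symmetric (gcompl adj) :=
  fun _ _ h => ⟨h.1.symm, fun h' => h.2 (hs h')⟩

lemma rtg_symm {r : V → V → Prop} (hs : Symmetric r) {x y : V}
    (h : ReflTransGen r x y) : ReflTransGen r y x := by
  induction h with
  | refl => exact .refl
  | tail _ hr ih => exact ReflTransGen.trans (ReflTransGen.single (hs hr)) ih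

lemma hasP4_gcompl {adj : V → V → Prop} (hs : Symmetric adj)
    (h : HasP4 (gcompl adj)) : HasP4 adj := by
  obtain ⟨a, b, c, d, hab, hbc, hcd, hac, had, hbd, nac, nad, nbd⟩ := h
  refine ⟨b, d, a, c, ?_, ?_, ?_, ?_, ?_, ?_, ?_, ?_, ?_⟩
  · by_contra h'; exact hbd ⟨nbd, h'⟩
  · by_contra h'; exact had ⟨nad, fun h2 => h' (hs h2)⟩
  · by_contra h'; exact hac ⟨nac, h'⟩
  · exact fun h' => hab.2 (hs h')
  · exact hbc.2
  · exact fun h' => hcd.2 (hs h')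
  · exact fun e => hab.1 e.symm
  · exact hbc.1
  · exact fun e => hcd.1 e.symm

section A
variable {adj : V → V → Prop} {v : V}

lemma reach_nbr (hconn : Preconn adj) (u : {u : V // u ≠ v}) :
    ∃ s : {u : V // u ≠ v}, ReflTransGen (fun a b : {u : V // u ≠ v} => adj a.1 b.1) u s
      ∧ adj s.1 v := by
  have key : ∀ x : V, ReflTransGen adj x v → x ≠ v →
      ∃ s : {u : V // u ≠ v}, ∀ hx : x ≠ v,
        ReflTransGen (fun a b : {u : V // u ≠ v} => adj a.1 b.1) ⟨x, hx⟩ s ∧ adj s.1 v := by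
    intro x hx
    induction hx using ReflTransGen.head_induction_on with
    | refl => intro hx; exact absurd rfl hx
    | @head p q hstep htail ih =>
      intro hp
      by_cases hq : q = v
      · exact ⟨⟨p, hp⟩, fun _ => ⟨.refl, hq ▸ hstep⟩⟩
      · obtain ⟨s, hrs⟩ := ih hq
        exact ⟨s, fun hp' => ⟨ReflTransGen.head hstep (hrs hq).1, (hrs hq).2⟩⟩
  obtain ⟨s, hs'⟩ := key u.1 (hconn u.1 v) u.2
  exact ⟨s, (hs' u.2).1, (hs' u.2).2⟩

lemma switch_edge' {q : {u : V // u ≠ v}} (hqv : adj q.1 v) :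
    ∀ {p : {u : V // u ≠ v}},
      ReflTransGen (fun a b : {u : V // u ≠ v} => adj a.1 b.1) p q → ¬ adj p.1 v →
    ∃ b a : {u : V // u ≠ v}, adj b.1 a.1 ∧ ¬ adj b.1 v ∧ adj a.1 v := by
  intro p h
  induction h using ReflTransGen.head_induction_on with
  | refl => intro hp; exact absurd hqv hp
  | @head x m hstep htail ih =>
    intro hx
    by_cases hm : adj m.1 v
    · exact ⟨x, m, hstep, hx, hm⟩
    · exact ih hm

lemma allAdj (hs : Symmetric adj) (hP4 : ¬ HasP4 adj) (hconn : Preconn adj)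
    (hdis : ¬ Preconn (fun a b : {u : V // u ≠ v} => adj a.1 b.1)) :
    ∀ u : {u : V // u ≠ v}, adj v u.1 := by
  set V' := {u : V // u ≠ v}
  set radj := fun a b : V' => adj a.1 b.1 with hradj
  have hrs : Symmetric radj := fun a b h => hs h
  obtain ⟨x0, y0, hxy⟩ : ∃ x y : V', ¬ ReflTransGen radj x y := by
    by_contra hc; push_neg at hc; exact hdis hc
  obtain ⟨s, hx0s, hsv⟩ := reach_nbr hconn x0
  obtain ⟨t, hy0t, htv⟩ := reach_nbr hconn y0
  have hst : ¬ ReflTransGen radj s t := by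
    intro h
    exact hxy (hx0s.trans (h.trans (rtg_symm hrs hy0t)))
  intro u
  by_contra huv
  have huv' : ¬ adj u.1 v := fun h => huv (hs h)
  obtain ⟨r, hur, hrv⟩ := reach_nbr hconn u
  obtain ⟨b, a, hba, hbv, hav⟩ := switch_edge' hrv hur huv'
  have hnot2 : ¬ (ReflTransGen radj a s ∧ ReflTransGen radj a t) := by
    rintro ⟨h1, h2⟩; exact hst ((rtg_symm hrs h1).trans h2)
  obtain ⟨w, haw, hwv⟩ : ∃ w : V', ¬ ReflTransGen radj a w ∧ adj w.1 v := by
    rcases not_and_or.mp hnot2 with h | h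
    exacts [⟨s, h, hsv⟩, ⟨t, h, htv⟩]
  apply hP4
  refine ⟨b.1, a.1, v, w.1, hba, hav, hs hwv, hbv, ?_, ?_, b.2, ?_, ?_⟩
  · intro h
    exact haw ((ReflTransGen.single (hrs hba)).trans (ReflTransGen.single h))
  · intro h
    exact haw (ReflTransGen.single h)
  · intro h
    exact haw (Subtype.ext h ▸ ReflTransGen.single (hrs hba))
  · intro h
    exact haw (Subtype.ext h ▸ ReflTransGen.refl)

end A

lemma preconn_congr {r r' : V → V → Prop} (h : ∀ a b, r a b ↔ r' a b) :
    Preconn r → Preconn r' := by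
  have : r = r' := by funext a b; exact propext (h a b)
  rw [this]; exact id

lemma card2_aux {W : Type} [Fintype W] (hcard : Fintype.card W = 2)
    {x y : W} (hxy : x ≠ y) : ∀ z : W, z ≠ x → z = y := by
  letI : DecidableEq W := Classical.decEq W
  intro z hz
  by_contra hzy
  have h3 : ({x, y, z} : Finset W).card = 3 := by
    rw [Finset.card_insert_of_notMem (by simp [hxy]; exact fun h => hz h.symm),
      Finset.card_insert_of_notMem (by simp; exact fun h => hzy h.symm), Finset.card_singleton]
  have : ({x, y, z} : Finset W).card ≤ Fintype.card W :=
    (Finset.card_le_card (Finset.subset_univ _)).trans_eq Finset.card_univ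
  omega

lemma seinsche : ∀ n : ℕ, ∀ (V : Type) [Fintype V] (adj : V → V → Prop),
    Symmetric adj → (∀ x, ¬ adj x x) → Fintype.card V = n → 2 ≤ n →
    Preconn adj → Preconn (gcompl adj) → HasP4 adj := by
  intro n
  induction n using Nat.strong_induction_on with
  | _ n IH =>
    intro V _ adj hs hirr hcard hn hconn hcoconn
    by_contra hP4
    letI : DecidableEq V := Classical.decEq V
    rcases eq_or_lt_of_le hn with h2 | h3
    · -- card = 2
      have hpos : 0 < Fintype.card V := by omega
      obtain ⟨x⟩ := Fintype.card_pos_iff.mp hpos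
      obtain ⟨y, hyx⟩ := Fintype.exists_ne_of_one_lt_card (by omega) x
      have huniq := card2_aux (by omega) hyx.symm
      have hadj : adj x y := by
        rcases (hconn x y).cases_head with h | ⟨c, hxc, -⟩
        · exact absurd h.symm hyx
        · have hcx : c ≠ x := fun e => hirr x (e ▸ hxc)
          exact (huniq c hcx) ▸ hxc
      rcases (hcoconn x y).cases_head with h | ⟨c, hxc, -⟩
      · exact hyx h.symm
      · have hcx : c ≠ x := fun e => hxc.1 e.symm
        exact (huniq c hcx ▸ hxc).2 hadj
    · -- n ≥ 3
      have hpos : 0 < Fintype.card V := by omega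
      obtain ⟨v⟩ := Fintype.card_pos_iff.mp hpos
      set V' := {u : V // u ≠ v} with hV'
      have hcard' : Fintype.card V' = n - 1 := by
        have h1 := Fintype.card_subtype_compl (fun u : V => u = v)
        rw [Fintype.card_subtype_eq, hcard] at h1
        exact h1
      set radj := fun a b : V' => adj a.1 b.1 with hradj
      have hlift : HasP4 radj → HasP4 adj := by
        rintro ⟨a, b, c, d, h1, h2, h3, h4, h5, h6, n1, n2, n3⟩
        exact ⟨a.1, b.1, c.1, d.1, h1, h2, h3, h4, h5, h6,
          fun e => n1 (Subtype.ext e), fun e => n2 (Subtype.ext e),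
          fun e => n3 (Subtype.ext e)⟩
      by_cases hc1 : Preconn radj
      · by_cases hc2 : Preconn (gcompl radj)
        · exact hP4 (hlift (IH (n-1) (by omega) V' radj (fun a b h => hs h)
            (fun a => hirr a.1) hcard' (by omega) hc1 hc2))
        · have hP4c : ¬ HasP4 (gcompl adj) := fun h => hP4 (hasP4_gcompl hs h)
          have hdis : ¬ Preconn (fun a b : V' => gcompl adj a.1 b.1) := by
            intro h
            exact hc2 (preconn_congr (fun a b => by
              constructor
              · rintro ⟨h1, h2⟩; exact ⟨fun e => h1 (congrArg Subtype.val e), h2⟩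
              · rintro ⟨h1, h2⟩; exact ⟨fun e => h1 (Subtype.ext e), h2⟩) h)
          have hall := allAdj (gcompl_symm hs) hP4c hcoconn hdis
          obtain ⟨u, hu⟩ := Fintype.exists_ne_of_one_lt_card (by omega) v
          rcases (hconn v u).cases_head with h | ⟨c, hvc, -⟩
          · exact hu h.symm
          · have hcv : c ≠ v := fun e => hirr v (e ▸ hvc)
            exact (hall ⟨c, hcv⟩).2 hvc
      · have hall := allAdj hs hP4 hconn hc1
        obtain ⟨u, hu⟩ := Fintype.exists_ne_of_one_lt_card (by omega) v
        rcases (hcoconn v u).cases_head with h | ⟨c, hvc, -⟩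
        · exact hu h.symm
        · exact hvc.2 (hall ⟨c, fun e => hvc.1 e.symm⟩)


section Poset
variable {α : Type} [o : PartialOrder α]

def cAdj (α : Type) [PartialOrder α] : α → α → Prop :=
  fun x y => x ≠ y ∧ (x ≤ y ∨ y ≤ x)

lemma cAdj_symm : Symmetric (cAdj α) :=
  fun _ _ h => ⟨h.1.symm, h.2.symm⟩

lemma cAdj_irrefl : ∀ x : α, ¬ cAdj α x x := fun x h => h.1 rfl

lemma incomp_of_not_cAdj {x y : α} (hne : x ≠ y) (h : ¬ cAdj α x y) :
    ¬ x ≤ y ∧ ¬ y ≤ x := by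
  constructor <;> intro h' <;> exact h ⟨hne, by tauto⟩

lemma zEmbed_of_hasP4 (h : HasP4 (cAdj α)) :
    ∃ f : Fin 4 → α, Function.Injective f ∧ ∀ x y : Fin 4, ZLE x y ↔ f x ≤ f y := by
  obtain ⟨a, b, c, d, hab, hbc, hcd, hac, had, hbd, nac, nad, nbd⟩ := h
  obtain ⟨iac1, iac2⟩ := incomp_of_not_cAdj nac hac
  obtain ⟨iad1, iad2⟩ := incomp_of_not_cAdj nad had
  obtain ⟨ibd1, ibd2⟩ := incomp_of_not_cAdj nbd hbd
  have eab : a ≠ b := hab.1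
  have eba : b ≠ a := hab.1.symm
  have ebc : b ≠ c := hbc.1
  have ecb : c ≠ b := hbc.1.symm
  have ecd : c ≠ d := hcd.1
  have edc : d ≠ c := hcd.1.symm
  have eca : c ≠ a := nac.symm
  have eda : d ≠ a := nad.symm
  have edb : d ≠ b := nbd.symm
  rcases hbc.2 with hbc2 | hbc2
  · -- b ≤ c
    have hba : b ≤ a := by
      rcases hab.2 with h' | h'
      · exact absurd (h'.trans hbc2) iac1
      · exact h'
    have hdc : d ≤ c := by
      rcases hcd.2 with h' | h'
      · exact absurd (hbc2.trans h') ibd1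
      · exact h'
    have ncd : ¬ c ≤ d := fun h' => ecd (le_antisymm h' hdc)
    have ncb : ¬ c ≤ b := fun h' => ebc (le_antisymm hbc2 h')
    have nab : ¬ a ≤ b := fun h' => iac1 (h'.trans hbc2)
    refine ⟨![d, c, b, a], ?_, ?_⟩
    · intro i j hij
      fin_cases i <;> fin_cases j <;> simp_all
    · intro x y
      fin_cases x <;> fin_cases y <;>
        simp_all [ZLE, Fin.isValue]
  · -- c ≤ b
    have hab' : a ≤ b := by
      rcases hab.2 with h' | h'
      · exact h'
      · exact absurd (hbc2.trans h') iac2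
    have hcd' : c ≤ d := by
      rcases hcd.2 with h' | h'
      · exact h'
      · exact absurd (h'.trans hbc2) ibd2
    have nba : ¬ b ≤ a := fun h' => eab (le_antisymm hab' h')
    have nbc : ¬ b ≤ c := fun h' => ebc (le_antisymm h' hbc2)
    have ndc : ¬ d ≤ c := fun h' => ecd (le_antisymm hcd' h')
    refine ⟨![a, b, c, d], ?_, ?_⟩
    · intro i j hij
      fin_cases i <;> fin_cases j <;> simp_all
    · intro x y
      fin_cases x <;> fin_cases y <;>
        simp_all [ZLE, Fin.isValue]
end Poset

section Split
variable {α : Type} [o : PartialOrder α]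

lemma noZ_subtype (h : NoZFullEmbedding α) (s : Set α) : NoZFullEmbedding s := by
  rintro ⟨f, hinj, hord⟩
  exact h ⟨fun i => (f i).1, fun i j hij => hinj (Subtype.ext hij),
    fun x y => (hord x y).trans Subtype.coe_le_coe.symm⟩

lemma expressible_split_disj (s : Set α)
    (hcross : ∀ p ∈ s, ∀ q ∉ s, ¬ p ≤ q ∧ ¬ q ≤ p)
    (h1 : Expressible s inferInstance) (h2 : Expressible ↥(sᶜ) inferInstance) :
    Expressible α o := by
  classical
  refine Expressible.iso (disjOrder ↥s ↥(sᶜ)) o (Equiv.Set.sumCompl s) ?_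
    (Expressible.disj h1 h2)
  rintro (x | x) (y | y) <;>
    simp only [Equiv.Set.sumCompl_apply_inl, Equiv.Set.sumCompl_apply_inr]
  · refine ⟨fun h => ?_, fun h => Sum.LiftRel.inl h⟩
    cases h with | inl h => exact h
  · refine ⟨fun h => ?_, fun h => absurd h (hcross x x.2 y y.2).1⟩
    cases h
  · refine ⟨fun h => ?_, fun h => absurd h (hcross y y.2 x x.2).2⟩
    cases h
  · refine ⟨fun h => ?_, fun h => Sum.LiftRel.inr h⟩
    cases h with | inr h => exact h

lemma expressible_split_join (s : Set α)
    (hcross : ∀ p ∈ s, ∀ q ∉ s, p ≤ q)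
    (h1 : Expressible s inferInstance) (h2 : Expressible ↥(sᶜ) inferInstance) :
    Expressible α o := by
  classical
  refine Expressible.iso (Join.instPartialOrder (α := ↥s) (β := ↥(sᶜ))) o
    ((Equiv.Set.sumCompl s : ↥s ⊕ ↥(sᶜ) ≃ α) : Join ↥s ↥(sᶜ) ≃ α) ?_
    (Expressible.join h1 h2)
  rintro (x | x) (y | y)
  · exact Subtype.coe_le_coe
  · exact iff_of_true trivial (hcross x x.2 y y.2)
  · exact iff_of_false (fun h => h)
      (fun h => x.2 ((le_antisymm h (hcross (y : α) y.2 (x : α) x.2) : (x : α) = (y : α)) ▸ y.2))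
  · exact Subtype.coe_le_coe

end Split

section Main
variable {α : Type} [o : PartialOrder α]

lemma const_dir {x q : α}
    (hcomp : ∀ p, Relation.ReflTransGen (gcompl (cAdj α)) x p → (p ≤ q ∨ q ≤ p))
    (hxq : x ≤ q) : ∀ p, Relation.ReflTransGen (gcompl (cAdj α)) x p → p ≤ q := by
  intro p hp
  induction hp with
  | refl => exact hxq
  | @tail m p' hxm hstep ih =>
    rcases hcomp _ (hxm.tail hstep) with h | h
    · exact h
    · exact absurd ⟨hstep.1, Or.inl (ih.trans h)⟩ hstep.2

lemma const_dir' {x q : α}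
    (hcomp : ∀ p, Relation.ReflTransGen (gcompl (cAdj α)) x p → (p ≤ q ∨ q ≤ p))
    (hqx : q ≤ x) : ∀ p, Relation.ReflTransGen (gcompl (cAdj α)) x p → q ≤ p := by
  intro p hp
  induction hp with
  | refl => exact hqx
  | @tail m p' hxm hstep ih =>
    rcases hcomp _ (hxm.tail hstep) with h | h
    · exact absurd ⟨fun e => hstep.1 e.symm, Or.inl (h.trans ih)⟩
        (fun hc => hstep.2 (cAdj_symm hc))
    · exact h

end Main

lemma card_set_lt {β : Type} [Fintype β] (s : Set β) [Fintype s] {y : β} (hy : y ∉ s) :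
    Fintype.card s < Fintype.card β :=
  Fintype.card_lt_of_injective_of_notMem Subtype.val Subtype.coe_injective
    (by rintro ⟨⟨a, ha⟩, rfl⟩; exact hy ha)

lemma main_aux : ∀ n : ℕ, ∀ (α : Type) [Fintype α] [o : PartialOrder α],
    Fintype.card α = n → NoZFullEmbedding α → Expressible α o := by
  intro n
  induction n using Nat.strong_induction_on with
  | _ n IH =>
    intro α _ o hcard hZ
    classical
    rcases Nat.lt_or_ge n 2 with hn | hn
    · rcases n with _ | _ | n
      · haveI := Fintype.card_eq_zero_iff.mp hcard
        exact Expressible.empty α o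
      · obtain ⟨x, hx⟩ := Fintype.card_eq_one_iff.mp hcard
        haveI : Unique α := ⟨⟨x⟩, hx⟩
        exact Expressible.single α o
      · omega
    · have hP4 : ¬ HasP4 (cAdj α) := fun hp => hZ (zEmbed_of_hasP4 hp)
      by_cases hconn : Preconn (cAdj α)
      · -- comparability graph connected: find a join decomposition
        have hcoconn : ¬ Preconn (gcompl (cAdj α)) := fun hco =>
          hP4 (seinsche n α (cAdj α) cAdj_symm cAdj_irrefl hcard hn hconn hco)
        obtain ⟨x, y, hxy⟩ : ∃ x y : α, ¬ Relation.ReflTransGen (gcompl (cAdj α)) x y := by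
          by_contra hc; push_neg at hc; exact hcoconn hc
        set A : Set α := {z | Relation.ReflTransGen (gcompl (cAdj α)) x z} with hAdef
        have hxA : x ∈ A := Relation.ReflTransGen.refl
        have hyA : y ∉ A := hxy
        have hcomp : ∀ p ∈ A, ∀ q ∉ A, p ≤ q ∨ q ≤ p := by
          intro p hp q hq
          by_contra hc
          push_neg at hc
          have hne : p ≠ q := fun e => hq (e ▸ hp)
          exact hq (Relation.ReflTransGen.tail hp
            ⟨hne, fun hadj => by rcases hadj.2 with h | h
                                 exacts [hc.1 h, hc.2 h]⟩)
        by_cases hup : ∃ w, w ∉ A ∧ x ≤ w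
        · obtain ⟨w, hwA, hxw⟩ := hup
          set s : Set α := A ∪ {u | u ∉ A ∧ u ≤ x} with hsdef
          have hxs : x ∈ s := Or.inl hxA
          have hws : w ∉ s := by
            rintro (h | ⟨-, hwx⟩)
            · exact hwA h
            · exact hwA (le_antisymm hxw hwx ▸ hxA)
          have hcross : ∀ p ∈ s, ∀ r ∉ s, p ≤ r := by
            intro p hp r hr
            have hrA : r ∉ A := fun h => hr (Or.inl h)
            have hrx : ¬ r ≤ x := fun h => hr (Or.inr ⟨hrA, h⟩)
            have hxr : x ≤ r := by
              rcases hcomp x hxA r hrA with h | h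
              · exact h
              · exact absurd h hrx
            have hAr : ∀ z, Relation.ReflTransGen (gcompl (cAdj α)) x z → z ≤ r :=
              const_dir (fun z hz => hcomp z hz r hrA) hxr
            rcases hp with hp | ⟨-, hpx⟩
            · exact hAr p hp
            · exact hpx.trans hxr
          have c1 : Fintype.card s < n := hcard ▸ card_set_lt s hws
          have c2 : Fintype.card ↥(sᶜ) < n :=
            hcard ▸ card_set_lt sᶜ (fun h => h hxs)
          exact expressible_split_join s hcross
            (IH _ c1 s rfl (noZ_subtype hZ s))
            (IH _ c2 ↥(sᶜ) rfl (noZ_subtype hZ sᶜ))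
        · push_neg at hup
          set s : Set α := {u | u ∉ A} with hsdef
          have hys : y ∈ s := hyA
          have hxs : x ∉ s := fun h => h hxA
          have hcross : ∀ p ∈ s, ∀ r ∉ s, p ≤ r := by
            intro p hp r hr
            have hrA : r ∈ A := not_not.mp hr
            have hpx : p ≤ x := by
              rcases hcomp x hxA p hp with h | h
              · exact absurd h (hup p hp)
              · exact h
            exact const_dir' (fun z hz => hcomp z hz p hp) hpx r hrA
          have c1 : Fintype.card s < n := hcard ▸ card_set_lt s hxs
          have c2 : Fintype.card ↥(sᶜ) < n :=
            hcard ▸ card_set_lt sᶜ (fun h => h hys)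
          exact expressible_split_join s hcross
            (IH _ c1 s rfl (noZ_subtype hZ s))
            (IH _ c2 ↥(sᶜ) rfl (noZ_subtype hZ sᶜ))
      · -- comparability graph disconnected: parallel decomposition
        obtain ⟨x, y, hxy⟩ : ∃ x y : α, ¬ Relation.ReflTransGen (cAdj α) x y := by
          by_contra hc; push_neg at hc; exact hconn hc
        set s : Set α := {z | Relation.ReflTransGen (cAdj α) x z} with hsdef
        have hxs : x ∈ s := Relation.ReflTransGen.refl
        have hys : y ∉ s := hxy
        have hcross : ∀ p ∈ s, ∀ q ∉ s, ¬ p ≤ q ∧ ¬ q ≤ p := by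
          intro p hp q hq
          have hne : p ≠ q := fun e => hq (e ▸ hp)
          exact incomp_of_not_cAdj hne
            (fun hadj => hq (Relation.ReflTransGen.tail hp hadj))
        have c1 : Fintype.card s < n := hcard ▸ card_set_lt s hys
        have c2 : Fintype.card ↥(sᶜ) < n :=
          hcard ▸ card_set_lt sᶜ (fun h => h hxs)
        exact expressible_split_disj s hcross
          (IH _ c1 s rfl (noZ_subtype hZ s))
          (IH _ c2 ↥(sᶜ) rfl (noZ_subtype hZ sᶜ))

end NoZAux

/-- Every finite poset with no full embedding of the zigzag `Z` is expressible. -/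
theorem noZ_expressible {α : Type} [Fintype α] (o : PartialOrder α)
    (h : @NoZFullEmbedding α o) : Expressible α o := by
  letI := o
  exact NoZAux.main_aux (Fintype.card α) α rfl h
end

section
/- A finite poset is expressible if and only if it contains no four distinct elements a, b, c, d whose induced partial order is exactly a < b, c < b, c < d (with a, d incomparable, a, c incomparable, and b, d incomparable). -/
open scoped NNReal

open Relation

section Graph
variable {α : Type}

/-- a symmetric irreflexive adjacency -/
def Conn (r : α → α → Prop) : Prop := ∀ x y : α, ReflTransGen r x y

def P4Free (r : α → α → Prop) : Prop :=
  ¬ ∃ a b c d : α, a ≠ b ∧ a ≠ c ∧ a ≠ d ∧ b ≠ c ∧ b ≠ d ∧ c ≠ d ∧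
    r a b ∧ r b c ∧ r c d ∧ ¬ r a c ∧ ¬ r a d ∧ ¬ r b d

def cpl (r : α → α → Prop) : α → α → Prop := fun x y => x ≠ y ∧ ¬ r x y

lemma cpl_symm {r : α → α → Prop} (h : Symmetric r) : Symmetric (cpl r) :=
  fun _ _ hxy => ⟨hxy.1.symm, fun hr => hxy.2 (h hr)⟩

lemma cpl_irrefl {r : α → α → Prop} : Irreflexive (cpl r) := fun _ h => h.1 rfl

lemma P4Free.cpl {r : α → α → Prop} (hs : Symmetric r) (h : P4Free r) : P4Free (cpl r) := by
  rintro ⟨a, b, c, d, hab, hac, had, hbc, hbd, hcd, rab, rbc, rcd, nac, nad, nbd⟩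
  have rac : r a c := by by_contra h'; exact nac ⟨hac, h'⟩
  have rad : r a d := by by_contra h'; exact nad ⟨had, h'⟩
  have rbd : r b d := by by_contra h'; exact nbd ⟨hbd, h'⟩
  -- path c - a - d - b in r
  exact h ⟨c, a, d, b, hac.symm, hcd, hbc.symm, had, hab, hbd.symm,
    hs rac, rad, hs rbd, rcd.2, fun h' => rbc.2 (hs h'), rab.2⟩

lemma no_step_isolated {r : α → α → Prop} {v : α} (h : ∀ z, ¬ r v z) {u : α}
    (hp : ReflTransGen r v u) : u = v := by
  induction hp with
  | refl => rfl
  | tail _ hstep ih => subst ih; exact absurd hstep (h _)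

/-- if v is adjacent to everything else, cpl r is disconnected (given another point). -/
lemma not_conn_of_adj_all {r : α → α → Prop} {v u : α} (hu : u ≠ v)
    (h : ∀ z, z ≠ v → r v z) : ¬ Conn (cpl r) := by
  intro hc
  have := no_step_isolated (r := cpl r) (v := v) (fun z hz => hz.2 (h z (Ne.symm hz.1))) (hc v u)
  exact hu this

end Graph

section
variable {α : Type} {r : α → α → Prop} {v : α}

/-- restriction of r to the complement of v, as a relation on α -/
def resAway (r : α → α → Prop) (v : α) : α → α → Prop := fun a b => a ≠ v ∧ b ≠ v ∧ r a b

lemma resAway_symm (hs : Symmetric r) : Symmetric (resAway r v) :=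
  fun _ _ h => ⟨h.2.1, h.1, hs h.2.2⟩

lemma rt_symm {s : α → α → Prop} (hs : Symmetric s) {a b : α}
    (h : ReflTransGen s a b) : ReflTransGen s b a := by
  induction h with
  | refl => exact .refl
  | tail _ hstep ih => exact ReflTransGen.head (hs hstep) ih

lemma reach_aux (hs : Symmetric r) {z : α} (h : ReflTransGen r z v) :
    z ≠ v → ∃ w, r v w ∧ ReflTransGen (resAway r v) z w := by
  induction h using ReflTransGen.head_induction_on with
  | refl => exact fun h => absurd rfl h
  | @head a c hstep _ ih =>
    intro ha
    by_cases hc : c = v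
    · exact ⟨a, hs (hc ▸ hstep), .refl⟩
    · obtain ⟨w, hw, hp⟩ := ih hc
      exact ⟨w, hw, ReflTransGen.head ⟨ha, hc, hstep⟩ hp⟩

lemma boundary_aux {u w : α} (h : ReflTransGen (resAway r v) u w) :
    ¬ r v u → r v w → ∃ p q, resAway r v p q ∧ ¬ r v p ∧ r v q := by
  induction h using ReflTransGen.head_induction_on with
  | refl => exact fun h1 h2 => absurd h2 h1
  | @head a c hstep _ ih =>
    intro ha hw
    by_cases hc : r v c
    · exact ⟨a, c, hstep, ha, hc⟩
    · exact ih hc hw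

lemma seinsche_step (hs : Symmetric r) (hirr : Irreflexive r) (hp4 : P4Free r)
    {x0 y0 : α} (hx0 : x0 ≠ v) (hy0 : y0 ≠ v)
    (hdis : ¬ ReflTransGen (resAway r v) x0 y0) (hconn : Conn r) :
    ∀ z, z ≠ v → r v z := by
  by_contra hcon
  push_neg at hcon
  obtain ⟨u, hu, hvu⟩ := hcon
  obtain ⟨w0, hw0, hp0⟩ := reach_aux hs (hconn u v) hu
  obtain ⟨p, q, hpq, hvp, hvq⟩ := boundary_aux hp0 hvu hw0
  -- pick s among x0 y0 not connected to q in resAway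
  have hsymres : Symmetric (resAway r v) := resAway_symm hs
  have : ∃ s, s ≠ v ∧ ¬ ReflTransGen (resAway r v) q s := by
    by_cases h1 : ReflTransGen (resAway r v) q x0
    · exact ⟨y0, hy0, fun h2 => hdis ((rt_symm hsymres h1).trans h2)⟩
    · exact ⟨x0, hx0, h1⟩
  obtain ⟨s, hsv, hqs⟩ := this
  obtain ⟨w1, hw1, hp1⟩ := reach_aux hs (hconn s v) hsv
  have hqw1 : ¬ ReflTransGen (resAway r v) q w1 := by
    intro h
    exact hqs (h.trans (rt_symm hsymres hp1))
  have hpv : p ≠ v := hpq.1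
  have hqv : q ≠ v := hpq.2.1
  have hrpq : r p q := hpq.2.2
  have hw1v : w1 ≠ v := fun h => hirr v (h ▸ hw1)
  have hpw1 : p ≠ w1 := by
    intro h
    exact hqw1 (h ▸ ReflTransGen.single (hsymres hpq))
  have hnpw1 : ¬ r p w1 := by
    intro h
    exact hqw1 ((ReflTransGen.single (hsymres hpq)).tail ⟨hpv, hw1v, h⟩)
  have hnqw1 : ¬ r q w1 := fun h => hqw1 (ReflTransGen.single ⟨hqv, hw1v, h⟩)
  have hqw1ne : q ≠ w1 := fun h => hqw1 (h ▸ .refl)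
  have hpqne : p ≠ q := fun h => hirr p (h ▸ hrpq)
  exact hp4 ⟨p, q, v, w1, hpqne, hpv, hpw1, hqv, hqw1ne, fun h => hirr v (h ▸ hw1),
    hrpq, hs hvq, hw1, fun h => hvp (hs h), hnpw1, hnqw1⟩
end
section
variable {α : Type} {v : α}
open Relation

lemma card_ne_subtype [Fintype α] [DecidableEq α] (v : α) :
    Fintype.card {z : α // z ≠ v} = Fintype.card α - 1 := by
  have := Fintype.card_subtype_compl (fun z : α => z = v)
  simpa [Fintype.card_subtype_eq] using this

lemma exists_two [Fintype α] (h : Fintype.card α = 2) :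
    ∃ x y : α, x ≠ y ∧ ∀ z, z = x ∨ z = y := by
  have h2 : Nat.card α = 2 := by simp [Nat.card_eq_fintype_card, h]
  obtain ⟨x, y, hxy, huniv⟩ := Nat.card_eq_two_iff.mp h2
  refine ⟨x, y, hxy, fun z => ?_⟩
  have : z ∈ ({x, y} : Set α) := huniv ▸ Set.mem_univ z
  simpa using this

lemma lift_rt {s : α → α → Prop} {a b : α}
    (h : ReflTransGen (resAway s v) a b) (ha : a ≠ v) (hb : b ≠ v) :
    ReflTransGen (fun x y : {z : α // z ≠ v} => s x.val y.val) ⟨a, ha⟩ ⟨b, hb⟩ := by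
  induction h with
  | refl => exact .refl
  | @tail c d hac hcd ih =>
    exact (ih hcd.1).tail hcd.2.2

theorem seinsche : ∀ (n : ℕ) (α : Type) [Fintype α] (r : α → α → Prop),
    Symmetric r → Irreflexive r → P4Free r → Fintype.card α = n → 2 ≤ n →
    ¬ Conn r ∨ ¬ Conn (cpl r) := by
  intro n
  induction n using Nat.strong_induction_on with
  | _ n IH =>
    intro α _ r hs hirr hp4 hcard hn
    rcases eq_or_lt_of_le hn with h2 | h3
    · -- card = 2
      obtain ⟨x, y, hxy, hall⟩ := exists_two (h2 ▸ hcard)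
      by_cases hr : r x y
      · refine Or.inr (not_conn_of_adj_all (r := r) (v := x) hxy.symm fun z hz => ?_)
        rcases hall z with rfl | rfl
        · exact absurd rfl hz
        · exact hr
      · refine Or.inl fun hc => ?_
        have : ∀ z, ¬ r x z := by
          intro z hz
          rcases hall z with h | h
          · rw [h] at hz; exact hirr x hz
          · rw [h] at hz; exact hr hz
        exact hxy.symm (no_step_isolated this (hc x y))
    · -- card ≥ 3
      classical
      have hpos : 0 < Fintype.card α := by omega
      have : Nonempty α := Fintype.card_pos_iff.mp hpos
      obtain ⟨v⟩ := this
      set α' := {z : α // z ≠ v} with hα'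
      have hcard' : Fintype.card α' = n - 1 := by
        rw [card_ne_subtype, hcard]
      have hn' : 2 ≤ n - 1 := by omega
      have hlt : n - 1 < n := by omega
      -- restricted relation
      set r'' : α' → α' → Prop := fun x y => r x.val y.val with hr''
      have hs'' : Symmetric r'' := fun _ _ h => hs h
      have hirr'' : Irreflexive r'' := fun x h => hirr x.val h
      have hp4'' : P4Free r'' := by
        rintro ⟨a, b, c, d, hab, hac, had, hbc, hbd, hcd, rab, rbc, rcd, nac, nad, nbd⟩
        exact hp4 ⟨a.val, b.val, c.val, d.val,
          fun h => hab (Subtype.ext h), fun h => hac (Subtype.ext h),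
          fun h => had (Subtype.ext h), fun h => hbc (Subtype.ext h),
          fun h => hbd (Subtype.ext h), fun h => hcd (Subtype.ext h),
          rab, rbc, rcd, nac, nad, nbd⟩
      rcases IH (n-1) hlt α' r'' hs'' hirr'' hp4'' hcard' hn' with hdc | hdc
      · -- r restricted disconnected
        by_cases hcr : Conn r
        · right
          simp only [Conn, not_forall] at hdc
          obtain ⟨x, y, hnrt⟩ := hdc
          have hdis : ¬ ReflTransGen (resAway r v) x.val y.val := by
            intro h
            have := lift_rt (s := r) h x.2 y.2
            exact hnrt this
          have := seinsche_step hs hirr hp4 x.2 y.2 hdis hcr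
          exact not_conn_of_adj_all x.2 this
        · exact Or.inl hcr
      · -- complement of restriction disconnected
        by_cases hcc : Conn (cpl r)
        · left
          simp only [Conn, not_forall] at hdc
          obtain ⟨x, y, hnrt⟩ := hdc
          have hdis : ¬ ReflTransGen (resAway (cpl r) v) x.val y.val := by
            intro h
            have h2 := lift_rt (s := cpl r) h x.2 y.2
            refine hnrt (ReflTransGen.mono ?_ _ _ h2)
            rintro ⟨p, hp⟩ ⟨q, hq⟩ ⟨hne, hnr⟩
            exact ⟨fun h => hne (congrArg Subtype.val h), hnr⟩
          have hall := seinsche_step (cpl_symm hs) (cpl_irrefl) (hp4.cpl hs) x.2 y.2 hdis hcc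
          intro hc
          have hnov : ∀ z, ¬ r v z := by
            intro z hz
            by_cases hzv : z = v
            · exact hirr v (hzv ▸ hz)
            · exact (hall z hzv).2 hz
          exact x.2 (no_step_isolated hnov (hc v x.val))
        · exact Or.inr hcc
end

def NFree (α : Type) (o : PartialOrder α) : Prop :=
  ¬ ∃ a b c d : α, a ≠ b ∧ a ≠ c ∧ a ≠ d ∧ b ≠ c ∧ b ≠ d ∧ c ≠ d ∧
    o.lt a b ∧ o.lt c b ∧ o.lt c d ∧
    ¬ o.le a c ∧ ¬ o.le c a ∧ ¬ o.le a d ∧ ¬ o.le d a ∧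
    ¬ o.le b d ∧ ¬ o.le d b

lemma joinLE_iff {α β : Type} [PartialOrder α] [PartialOrder β] (x y : Join α β) :
    (Join.instPartialOrder).le x y ↔ joinLE (Join.out x) (Join.out y) := Iff.rfl

theorem Expressible.nfree {α : Type} {o : PartialOrder α} (h : Expressible α o) :
    NFree α o := by
  induction h with
  | empty α o => rintro ⟨a, -⟩; exact isEmptyElim a
  | single α o => rintro ⟨a, b, -, -, hab, -⟩; exact hab (Subsingleton.elim a b)
  | @disj α β oa ob ha hb iha ihb =>
    rintro ⟨a, b, c, d, hab, hac, had, hbc, hbd, hcd, ltab, ltcb, ltcd,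
      nac, nca, nad, nda, nbd, ndb⟩
    -- all on same side
    rcases a with a | a <;> rcases b with b | b <;>
      rcases c with c | c <;> rcases d with d | d <;>
      first
        | exact Sum.not_inl_lt_inr ltab
        | exact Sum.not_inr_lt_inl ltab
        | exact Sum.not_inl_lt_inr ltcb
        | exact Sum.not_inr_lt_inl ltcb
        | exact Sum.not_inl_lt_inr ltcd
        | exact Sum.not_inr_lt_inl ltcd
        | (exact iha ⟨a, b, c, d,
            fun h => hab (congrArg Sum.inl h), fun h => hac (congrArg Sum.inl h),
            fun h => had (congrArg Sum.inl h), fun h => hbc (congrArg Sum.inl h),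
            fun h => hbd (congrArg Sum.inl h), fun h => hcd (congrArg Sum.inl h),
            Sum.inl_lt_inl_iff.mp ltab, Sum.inl_lt_inl_iff.mp ltcb, Sum.inl_lt_inl_iff.mp ltcd,
            fun h => nac (Sum.inl_le_inl_iff.mpr h), fun h => nca (Sum.inl_le_inl_iff.mpr h),
            fun h => nad (Sum.inl_le_inl_iff.mpr h), fun h => nda (Sum.inl_le_inl_iff.mpr h),
            fun h => nbd (Sum.inl_le_inl_iff.mpr h), fun h => ndb (Sum.inl_le_inl_iff.mpr h)⟩)
        | (exact ihb ⟨a, b, c, d,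
            fun h => hab (congrArg Sum.inr h), fun h => hac (congrArg Sum.inr h),
            fun h => had (congrArg Sum.inr h), fun h => hbc (congrArg Sum.inr h),
            fun h => hbd (congrArg Sum.inr h), fun h => hcd (congrArg Sum.inr h),
            Sum.inr_lt_inr_iff.mp ltab, Sum.inr_lt_inr_iff.mp ltcb, Sum.inr_lt_inr_iff.mp ltcd,
            fun h => nac (Sum.inr_le_inr_iff.mpr h), fun h => nca (Sum.inr_le_inr_iff.mpr h),
            fun h => nad (Sum.inr_le_inr_iff.mpr h), fun h => nda (Sum.inr_le_inr_iff.mpr h),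
            fun h => nbd (Sum.inr_le_inr_iff.mpr h), fun h => ndb (Sum.inr_le_inr_iff.mpr h)⟩)
  | @join α β oa ob ha hb iha ihb =>
    rintro ⟨a, b, c, d, hab, hac, had, hbc, hbd, hcd, ltab, ltcb, ltcd,
      nac, nca, nad, nda, nbd, ndb⟩
    have ltL : ∀ x y : α, (Join.instPartialOrder (α := α) (β := β)).lt
        (Sum.inl x) (Sum.inl y) → oa.lt x y := by
      intro x y h
      obtain ⟨h1, h2⟩ := (Join.instPartialOrder.lt_iff_le_not_ge _ _).mp h
      exact (oa.lt_iff_le_not_ge x y).mpr ⟨h1, h2⟩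
    have ltR : ∀ x y : β, (Join.instPartialOrder (α := α) (β := β)).lt
        (Sum.inr x) (Sum.inr y) → ob.lt x y := by
      intro x y h
      obtain ⟨h1, h2⟩ := (Join.instPartialOrder.lt_iff_le_not_ge _ _).mp h
      exact (ob.lt_iff_le_not_ge x y).mpr ⟨h1, h2⟩
    rcases a with a | a <;> rcases b with b | b <;>
      rcases c with c | c <;> rcases d with d | d <;>
      first
        | exact nac trivial
        | exact nca trivial
        | exact nad trivial
        | exact nda trivial
        | exact nbd trivial
        | exact ndb trivial
        | (exact iha ⟨a, b, c, d,
            fun h => hab (congrArg Sum.inl h), fun h => hac (congrArg Sum.inl h),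
            fun h => had (congrArg Sum.inl h), fun h => hbc (congrArg Sum.inl h),
            fun h => hbd (congrArg Sum.inl h), fun h => hcd (congrArg Sum.inl h),
            ltL _ _ ltab, ltL _ _ ltcb, ltL _ _ ltcd,
            fun h => nac h, fun h => nca h, fun h => nad h, fun h => nda h,
            fun h => nbd h, fun h => ndb h⟩)
        | (exact ihb ⟨a, b, c, d,
            fun h => hab (congrArg Sum.inr h), fun h => hac (congrArg Sum.inr h),
            fun h => had (congrArg Sum.inr h), fun h => hbc (congrArg Sum.inr h),
            fun h => hbd (congrArg Sum.inr h), fun h => hcd (congrArg Sum.inr h),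
            ltR _ _ ltab, ltR _ _ ltcb, ltR _ _ ltcd,
            fun h => nac h, fun h => nca h, fun h => nad h, fun h => nda h,
            fun h => nbd h, fun h => ndb h⟩)
  | iso oa ob e he ha iha =>
    rintro ⟨a, b, c, d, hab, hac, had, hbc, hbd, hcd, ltab, ltcb, ltcd,
      nac, nca, nad, nda, nbd, ndb⟩
    have hlt : ∀ x y, ob.lt x y → oa.lt (e.symm x) (e.symm y) := by
      intro x y hxy
      rw [oa.lt_iff_le_not_ge]
      rw [ob.lt_iff_le_not_ge] at hxy
      constructor
      · rw [he]; simpa using hxy.1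
      · rw [he]; simpa using hxy.2
    have hle : ∀ x y, ¬ ob.le x y → ¬ oa.le (e.symm x) (e.symm y) := by
      intro x y hxy h
      rw [he, e.apply_symm_apply, e.apply_symm_apply] at h
      exact hxy h
    exact iha ⟨e.symm a, e.symm b, e.symm c, e.symm d,
      fun h => hab (e.symm.injective h), fun h => hac (e.symm.injective h),
      fun h => had (e.symm.injective h), fun h => hbc (e.symm.injective h),
      fun h => hbd (e.symm.injective h), fun h => hcd (e.symm.injective h),
      hlt _ _ ltab, hlt _ _ ltcb, hlt _ _ ltcd,
      hle _ _ nac, hle _ _ nca, hle _ _ nad, hle _ _ nda, hle _ _ nbd, hle _ _ ndb⟩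

section Rev
open Relation

lemma NFree.subtype {α : Type} [o : PartialOrder α] (h : NFree α o) (S : Set α) :
    NFree {x : α // x ∈ S} inferInstance := by
  rintro ⟨a, b, c, d, hab, hac, had, hbc, hbd, hcd, ltab, ltcb, ltcd,
    nac, nca, nad, nda, nbd, ndb⟩
  exact h ⟨a.val, b.val, c.val, d.val,
    fun h' => hab (Subtype.ext h'), fun h' => hac (Subtype.ext h'),
    fun h' => had (Subtype.ext h'), fun h' => hbc (Subtype.ext h'),
    fun h' => hbd (Subtype.ext h'), fun h' => hcd (Subtype.ext h'),
    Subtype.coe_lt_coe.mpr ltab, Subtype.coe_lt_coe.mpr ltcb, Subtype.coe_lt_coe.mpr ltcd,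
    fun h' => nac (Subtype.coe_le_coe.mp h'), fun h' => nca (Subtype.coe_le_coe.mp h'),
    fun h' => nad (Subtype.coe_le_coe.mp h'), fun h' => nda (Subtype.coe_le_coe.mp h'),
    fun h' => nbd (Subtype.coe_le_coe.mp h'), fun h' => ndb (Subtype.coe_le_coe.mp h')⟩

variable {α : Type} [Fintype α] [o : PartialOrder α]

lemma expressible_of_parallel_cut (S : Set α)
    (hS : ∀ u ∈ S, ∀ w ∉ S, ¬ u ≤ w ∧ ¬ w ≤ u)
    (e1 : Expressible {x : α // x ∈ S} inferInstance)
    (e2 : Expressible {x : α // ¬ x ∈ S} inferInstance) :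
    Expressible α o := by
  classical
  refine Expressible.iso (disjOrder _ _) o (Equiv.sumCompl (· ∈ S)) ?_
    (Expressible.disj e1 e2)
  rintro (u | u) (w | w)
  · exact Sum.inl_le_inl_iff
  · exact iff_of_false Sum.not_inl_le_inr (hS u.val u.2 w.val w.2).1
  · exact iff_of_false Sum.not_inr_le_inl (hS w.val w.2 u.val u.2).2
  · exact Sum.inr_le_inr_iff

lemma expressible_of_series_cut (L : Set α)
    (hL : ∀ u ∈ L, ∀ w ∉ L, o.lt u w)
    (e1 : Expressible {x : α // x ∈ L} inferInstance)
    (e2 : Expressible {x : α // ¬ x ∈ L} inferInstance) :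
    Expressible α o := by
  classical
  refine Expressible.iso Join.instPartialOrder o
    (show Join {x : α // x ∈ L} {x : α // ¬ x ∈ L} ≃ α from Equiv.sumCompl (· ∈ L)) ?_
    (Expressible.join e1 e2)
  rintro (u | u) (w | w)
  · exact Iff.rfl
  · exact iff_of_true trivial ((o.lt_iff_le_not_ge _ _).mp (hL u.val u.2 w.val w.2)).1
  · exact iff_of_false (fun h => h)
      ((o.lt_iff_le_not_ge _ _).mp (hL w.val w.2 u.val u.2)).2
  · exact Iff.rfl

end Rev

theorem nfree_expressible : ∀ (n : ℕ) (α : Type) [Fintype α] (o : PartialOrder α),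
    Fintype.card α = n → NFree α o → Expressible α o := by
  intro n
  induction n using Nat.strong_induction_on with
  | _ n IH =>
    intro α _ o hcard hnf
    letI := o
    classical
    rcases Nat.lt_or_ge n 2 with hn | hn
    · -- n = 0 or 1
      interval_cases n
      · haveI : IsEmpty α := Fintype.card_eq_zero_iff.mp hcard
        exact Expressible.empty α o
      · obtain ⟨x, hx⟩ := Fintype.card_eq_one_iff.mp hcard
        haveI : Unique α := ⟨⟨x⟩, fun y => hx y⟩
        exact Expressible.single α o
    · -- n ≥ 2
      set comp : α → α → Prop := fun x y => x ≠ y ∧ (x ≤ y ∨ y ≤ x) with hcompdef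
      have hsym : Symmetric comp := fun u v h => ⟨h.1.symm, h.2.symm⟩
      have hirr : Irreflexive comp := fun u h => h.1 rfl
      have hp4 : P4Free comp := by
        rintro ⟨a, b, c, d, hab, hac, had, hbc, hbd, hcd, eab, ebc, ecd, nac, nad, nbd⟩
        have iac : ¬ a ≤ c ∧ ¬ c ≤ a :=
          ⟨fun h => nac ⟨hac, Or.inl h⟩, fun h => nac ⟨hac, Or.inr h⟩⟩
        have iad : ¬ a ≤ d ∧ ¬ d ≤ a :=
          ⟨fun h => nad ⟨had, Or.inl h⟩, fun h => nad ⟨had, Or.inr h⟩⟩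
        have ibd : ¬ b ≤ d ∧ ¬ d ≤ b :=
          ⟨fun h => nbd ⟨hbd, Or.inl h⟩, fun h => nbd ⟨hbd, Or.inr h⟩⟩
        rcases eab.2 with h1 | h1
        · have h2 : c ≤ b := by
            rcases ebc.2 with h | h
            · exact absurd (h1.trans h) iac.1
            · exact h
          have h3 : c ≤ d := by
            rcases ecd.2 with h | h
            · exact h
            · exact absurd (h.trans h2) ibd.2
          exact hnf ⟨a, b, c, d, hab, hac, had, hbc, hbd, hcd,
            lt_of_le_of_ne h1 hab, lt_of_le_of_ne h2 hbc.symm, lt_of_le_of_ne h3 hcd,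
            iac.1, iac.2, iad.1, iad.2, ibd.1, ibd.2⟩
        · have h2 : b ≤ c := by
            rcases ebc.2 with h | h
            · exact h
            · exact absurd (h.trans h1) iac.2
          have h3 : d ≤ c := by
            rcases ecd.2 with h | h
            · exact absurd (h2.trans h) ibd.1
            · exact h
          exact hnf ⟨d, c, b, a, hcd.symm, hbd.symm, had.symm, hbc.symm, hac.symm, hab.symm,
            lt_of_le_of_ne h3 hcd.symm, lt_of_le_of_ne h2 hbc, lt_of_le_of_ne h1 hab.symm,
            ibd.2, ibd.1, iad.2, iad.1, iac.2, iac.1⟩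
      rcases seinsche n α comp hsym hirr hp4 hcard hn with hdc | hdc
      · -- parallel case
        simp only [Conn, not_forall] at hdc
        obtain ⟨x, y, hxy⟩ := hdc
        set S : Set α := {z | ReflTransGen comp x z} with hSdef
        have hxS : x ∈ S := ReflTransGen.refl
        have hyS : y ∉ S := hxy
        have hcross : ∀ u ∈ S, ∀ w ∉ S, ¬ u ≤ w ∧ ¬ w ≤ u := by
          intro u hu w hw
          constructor <;> intro h <;>
            rcases eq_or_ne u w with rfl | hne
          · exact hw hu
          · exact hw (ReflTransGen.tail hu ⟨hne, Or.inl h⟩)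
          · exact hw hu
          · exact hw (ReflTransGen.tail hu ⟨hne, Or.inr h⟩)
        have c1 : Fintype.card {z : α // z ∈ S} < n :=
          hcard ▸ Fintype.card_subtype_lt (x := y) hyS
        have c2 : Fintype.card {z : α // ¬ z ∈ S} < n :=
          hcard ▸ Fintype.card_subtype_lt (x := x) (not_not_intro hxS)
        exact expressible_of_parallel_cut S hcross
          (IH _ c1 _ _ rfl (hnf.subtype S))
          (IH _ c2 _ _ rfl (hnf.subtype {x : α | ¬ x ∈ S}))
      · -- series case
        simp only [Conn, not_forall] at hdc
        obtain ⟨x0, y0, hxy⟩ := hdc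
        set A : Set α := {z | ReflTransGen (cpl comp) x0 z} with hAdef
        have hx0A : x0 ∈ A := ReflTransGen.refl
        have hy0A : y0 ∉ A := hxy
        have hcross : ∀ u ∈ A, ∀ w ∉ A, u < w ∨ w < u := by
          intro u hu w hw
          have hne : u ≠ w := fun h => hw (h ▸ hu)
          have hni : ¬ cpl comp u w := fun h => hw (ReflTransGen.tail hu h)
          have hcmp : comp u w := by
            by_contra h
            exact hni ⟨hne, h⟩
          rcases hcmp.2 with h | h
          · exact Or.inl (lt_of_le_of_ne h hne)
          · exact Or.inr (lt_of_le_of_ne h hne.symm)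
        have key1 : ∀ {w}, w ∉ A → ∀ {z z'}, ReflTransGen (cpl comp) z z' →
            z ∈ A → z < w → z' < w := by
          intro w hw z z' hpath hz hzw
          induction hpath with
          | refl => exact hzw
          | @tail c d hzc hstep ih =>
            have hcA : c ∈ A := hz.trans hzc
            have hdA : d ∈ A := hcA.tail hstep
            rcases hcross d hdA w hw with h | h
            · exact h
            · exact absurd ⟨(ih.trans h).ne, Or.inl (ih.trans h).le⟩ hstep.2
        have key2 : ∀ {w}, w ∉ A → ∀ {z z'}, ReflTransGen (cpl comp) z z' →
            z ∈ A → w < z → w < z' := by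
          intro w hw z z' hpath hz hzw
          induction hpath with
          | refl => exact hzw
          | @tail c d hzc hstep ih =>
            have hcA : c ∈ A := hz.trans hzc
            have hdA : d ∈ A := hcA.tail hstep
            rcases hcross d hdA w hw with h | h
            · exact absurd ⟨(h.trans ih).ne', Or.inr (h.trans ih).le⟩ hstep.2
            · exact h
        by_cases hup : ∃ w, w ∉ A ∧ x0 < w
        · -- some element above the component: lower part = complement of Up
          obtain ⟨w0, hw0A, hw0⟩ := hup
          set L : Set α := {z | ¬ (z ∉ A ∧ x0 < z)} with hLdef
          have hx0L : x0 ∈ L := fun h => h.1 hx0A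
          have hw0L : w0 ∉ L := fun h => h ⟨hw0A, hw0⟩
          have hL : ∀ u ∈ L, ∀ w ∉ L, o.lt u w := by
            intro u hu w hw
            have hw' : w ∉ A ∧ x0 < w := not_not.mp hw
            by_cases huA : u ∈ A
            · exact key1 hw'.1 huA hx0A hw'.2
            · have hux0 : u < x0 := by
                rcases hcross x0 hx0A u huA with h | h
                · exact absurd ⟨huA, h⟩ hu
                · exact h
              exact hux0.trans hw'.2
          have c1 : Fintype.card {z : α // z ∈ L} < n :=
            hcard ▸ Fintype.card_subtype_lt (x := w0) hw0L
          have c2 : Fintype.card {z : α // ¬ z ∈ L} < n :=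
            hcard ▸ Fintype.card_subtype_lt (x := x0) (not_not_intro hx0L)
          exact expressible_of_series_cut L hL
            (IH _ c1 _ _ rfl (hnf.subtype L))
            (IH _ c2 _ _ rfl (hnf.subtype {x : α | ¬ x ∈ L}))
        · -- everything outside the component is below it
          push_neg at hup
          set L : Set α := {z | z ∉ A} with hLdef
          have hy0L : y0 ∈ L := hy0A
          have hx0L : x0 ∉ L := not_not_intro hx0A
          have hL : ∀ u ∈ L, ∀ w ∉ L, o.lt u w := by
            intro u hu w hw
            have hwA : w ∈ A := not_not.mp hw
            have hux0 : u < x0 := by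
              rcases hcross x0 hx0A u hu with h | h
              · exact absurd h (hup u hu)
              · exact h
            exact key2 hu hwA hx0A hux0
          have c1 : Fintype.card {z : α // z ∈ L} < n :=
            hcard ▸ Fintype.card_subtype_lt (x := x0) hx0L
          have c2 : Fintype.card {z : α // ¬ z ∈ L} < n :=
            hcard ▸ Fintype.card_subtype_lt (x := y0) (not_not_intro hy0L)
          exact expressible_of_series_cut L hL
            (IH _ c1 _ _ rfl (hnf.subtype L))
            (IH _ c2 _ _ rfl (hnf.subtype {x : α | ¬ x ∈ L}))


/-- A finite poset is expressible iff it has no four distinct elements whose induced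
order is exactly the zigzag `a < b`, `c < b`, `c < d`. -/
theorem expressible_iff_no_zigzag {α : Type} [Fintype α] (o : PartialOrder α) :
    Expressible α o ↔
      ¬ ∃ a b c d : α, a ≠ b ∧ a ≠ c ∧ a ≠ d ∧ b ≠ c ∧ b ≠ d ∧ c ≠ d ∧
        o.lt a b ∧ o.lt c b ∧ o.lt c d ∧
        ¬ o.le a c ∧ ¬ o.le c a ∧ ¬ o.le a d ∧ ¬ o.le d a ∧
        ¬ o.le b d ∧ ¬ o.le d b :=
  ⟨fun h => h.nfree, fun h => nfree_expressible (Fintype.card α) α o rfl h⟩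
end

section
/- Every connected finite poset P with no full embedding of Z and more than one element decomposes as a join: letting P_max be the set of maximal elements of P, P_⊥ the set of elements strictly below every maximal element, and P_⊤ its complement, both P_⊥ and P_⊤ are nonempty and P is order-isomorphic to P_⊥ ⋈ P_⊤. -/
open scoped NNReal

section Aux

variable {α : Type} [Fintype α] [PartialOrder α]

/-- Maximality predicate as in the statement. -/
def Mx (m : α) : Prop := ∀ y, m ≤ y → y = m

lemma exists_mx_ge (x : α) : ∃ m, x ≤ m ∧ Mx m := by
  classical
  obtain ⟨m, hm, hmax⟩ := (Finset.univ.filter (fun y => x ≤ y)).exists_maximal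
    ⟨x, by simp⟩
  simp only [Finset.mem_filter, Finset.mem_univ, true_and] at hm
  refine ⟨m, hm, fun y hy => ?_⟩
  by_contra hne
  exact hne (le_antisymm (hmax (by simpa using hm.trans hy) hy) hy)

lemma noZ_of (hZ : NoZFullEmbedding α) {a b c d : α}
    (hab : a < b) (hcb : c < b) (hcd : c < d)
    (hac : ¬ a ≤ c) (hca : ¬ c ≤ a) (had : ¬ a ≤ d) (hda : ¬ d ≤ a)
    (hbd : ¬ b ≤ d) (hdb : ¬ d ≤ b) : False := by
  have h01 : a ≠ b := hab.ne
  have h21 : c ≠ b := hcb.ne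
  have h23 : c ≠ d := hcd.ne
  have h02 : a ≠ c := fun h => hac h.le
  have h03 : a ≠ d := fun h => had h.le
  have h13 : b ≠ d := fun h => hbd h.le
  have hba : ¬ b ≤ a := fun h => h01 (le_antisymm hab.le h)
  have hbc : ¬ b ≤ c := fun h => h21 (le_antisymm hcb.le h)
  have hdc : ¬ d ≤ c := fun h => h23 (le_antisymm hcd.le h)
  apply hZ
  refine ⟨![a, b, c, d], ?_, ?_⟩
  · intro i j hij
    fin_cases i <;> fin_cases j <;> simp_all
  · intro i j
    fin_cases i <;> fin_cases j <;>
      simp_all [ZLE, le_refl, hab.le, hcb.le, hcd.le]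

end Aux

section Aux2

variable {α : Type} [Fintype α] [PartialOrder α]

/-- Two maximal elements linked by a common strict lower bound (or equal). -/
def MxRel (m n : α) : Prop := Mx m ∧ Mx n ∧ (m = n ∨ ∃ z, z < m ∧ z < n)

lemma mxRel_step {m n v : α} (hm : Mx m) (hn : Mx n) (hvm : v ≤ m) (hvn : v ≤ n) :
    Relation.ReflTransGen (MxRel (α := α)) m n := by
  by_cases h : m = n
  · exact h ▸ Relation.ReflTransGen.refl
  · have hvm' : v < m := lt_of_le_of_ne hvm (fun e => h (by subst e; exact (hm n hvn).symm))
    have hvn' : v < n := lt_of_le_of_ne hvn (fun e => h (by subst e; exact hn m hvm))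
    exact Relation.ReflTransGen.single ⟨hm, hn, Or.inr ⟨v, hvm', hvn'⟩⟩

lemma mx_path {u v : α}
    (h : Relation.ReflTransGen (fun a b : α => a ≤ b ∨ b ≤ a) u v) :
    ∀ m n, Mx m → Mx n → u ≤ m → v ≤ n → Relation.ReflTransGen (MxRel (α := α)) m n := by
  induction h with
  | refl => exact fun m n hm hn hum hun => mxRel_step hm hn hum hun
  | @tail w v hw step ih =>
    intro m n hm hn hum hvn
    rcases step with h1 | h1
    · exact ih m n hm hn hum (h1.trans hvn)
    · obtain ⟨k, hwk, hk⟩ := exists_mx_ge w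
      exact (ih m k hm hk hum hwk).trans (mxRel_step hk hn (h1.trans hwk) hvn)

lemma exists_lt_of (hconn : PosetConnected α) (hcard : 1 < Fintype.card α) :
    ∃ u v : α, u < v := by
  by_contra h
  push_neg at h
  have heq : ∀ u v : α, (u ≤ v ∨ v ≤ u) → u = v := by
    intro u v huv
    rcases huv with h1 | h1
    · by_contra hne; exact h u v (lt_of_le_of_ne h1 hne)
    · by_contra hne; exact (h v u (lt_of_le_of_ne h1 (Ne.symm hne))).elim
  obtain ⟨a, b, hab⟩ := Fintype.one_lt_card_iff_nontrivial.mp hcard |>.exists_pair_ne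
  refine hab ?_
  suffices h2 : ∀ v, Relation.ReflTransGen (fun u v : α => u ≤ v ∨ v ≤ u) a v → a = v from
    h2 b (hconn a b)
  intro v hv
  induction hv with
  | refl => rfl
  | tail _ step ih => exact ih.trans (heq _ _ step)

lemma pbot_nonempty_of (hconn : PosetConnected α) (hZ : NoZFullEmbedding α)
    (hcard : 1 < Fintype.card α) : ∃ x : α, ∀ m, Mx m → x < m := by
  classical
  set U : α → Finset α := fun x => Finset.univ.filter (fun m => Mx m ∧ x < m) with hU
  have hmemU : ∀ x m, m ∈ U x ↔ Mx m ∧ x < m := by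
    intro x m; simp [hU]
  have hS : ∃ x : α, (U x).Nonempty := by
    obtain ⟨u, v, huv⟩ := exists_lt_of hconn hcard
    obtain ⟨m, hvm, hm⟩ := exists_mx_ge v
    exact ⟨u, m, (hmemU u m).mpr ⟨hm, lt_of_lt_of_le huv hvm⟩⟩
  obtain ⟨x, hxS, hmax⟩ := Finset.exists_max_image
    (Finset.univ.filter fun x => (U x).Nonempty) (fun x => (U x).card)
    (by obtain ⟨x, hx⟩ := hS; exact ⟨x, by simp [hx]⟩)
  simp only [Finset.mem_filter, Finset.mem_univ, true_and] at hxS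
  -- key crossing lemma
  have key : ∀ m₁ m₂ : α, Mx m₁ → Mx m₂ → x < m₁ → MxRel m₁ m₂ → x < m₂ := by
    intro m₁ m₂ hm₁ hm₂ hx₁ hrel
    rcases hrel.2.2 with rfl | ⟨z, hz₁, hz₂⟩
    · exact hx₁
    by_contra hx₂
    have hne : m₁ ≠ m₂ := fun e => hx₂ (e ▸ hx₁)
    have hxm2 : ¬ x ≤ m₂ := by
      intro h
      rcases lt_or_eq_of_le h with h | h
      · exact hx₂ h
      · exact hne (hm₂ m₁ (h ▸ hx₁.le))
    have hm2x : ¬ m₂ ≤ x := fun h => hne (hm₂ m₁ (h.trans hx₁.le))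
    have hm12 : ¬ m₁ ≤ m₂ := fun h => hne (hm₁ m₂ h).symm
    have hm21 : ¬ m₂ ≤ m₁ := fun h => hne (hm₂ m₁ h)
    have hxz : ¬ x ≤ z := fun h => hxm2 (h.trans hz₂.le)
    have hzx : ¬ z ≤ x := by
      intro h
      -- then U x ⊊ U z, contradicting maximality
      have hsub : U x ⊆ U z := by
        intro m hm
        rw [hmemU] at hm ⊢
        exact ⟨hm.1, lt_of_le_of_lt h hm.2⟩
      have hm2z : m₂ ∈ U z := (hmemU z m₂).mpr ⟨hm₂, hz₂⟩
      have hm2x' : m₂ ∉ U x := fun hmm => hx₂ ((hmemU x m₂).mp hmm).2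
      have hcardlt : (U x).card < (U z).card :=
        Finset.card_lt_card (Finset.ssubset_iff_of_subset hsub |>.mpr ⟨m₂, hm2z, hm2x'⟩)
      have := hmax z (by
        simp only [Finset.mem_filter, Finset.mem_univ, true_and]
        exact ⟨m₂, hm2z⟩)
      omega
    exact noZ_of hZ hx₁ hz₁ hz₂ hxz hzx hxm2 hm2x hm12 hm21
  refine ⟨x, fun m hm => ?_⟩
  obtain ⟨m', hm'U⟩ := hxS
  rw [hmemU] at hm'U
  have hpath : Relation.ReflTransGen (MxRel (α := α)) m' m :=
    mx_path (hconn x m) m' m hm'U.1 hm hm'U.2.le le_rfl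
  clear hmemU hS hmax
  have main : ∀ n, Relation.ReflTransGen (MxRel (α := α)) m' n → x < n := by
    intro n hp
    induction hp with
    | refl => exact hm'U.2
    | @tail b c hb step ih => exact key b c step.1 step.2.1 ih step
  exact main m hpath

lemma pbot_le_ptop_of (hconn : PosetConnected α) (hZ : NoZFullEmbedding α)
    {x y : α} (hx : ∀ m, Mx m → x < m) (hy : ¬ ∀ m, Mx m → y < m) : x < y := by
  push_neg at hy
  obtain ⟨m₁, hm₁, hym₁⟩ := hy
  obtain ⟨m₀, hym₀, hm₀⟩ := exists_mx_ge y
  rcases eq_or_lt_of_le hym₀ with rfl | hym₀'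
  · exact hx y hm₀
  by_cases hym : y ≤ m₁
  · rcases eq_or_lt_of_le hym with rfl | h
    · exact hx y hm₁
    · exact absurd h hym₁
  have hmy : ¬ m₁ ≤ y := fun h => hym (le_of_eq (hm₁ y h))
  by_cases hxy : x ≤ y
  · rcases eq_or_lt_of_le hxy with rfl | h
    · exact absurd (hx m₁ hm₁) hym₁
    · exact h
  have hyx : ¬ y ≤ x := by
    intro h
    exact hym₁ (lt_of_le_of_lt h (hx m₁ hm₁))
  have hm01 : m₀ ≠ m₁ := fun e => hym (e ▸ hym₀'.le)
  have h0le1 : ¬ m₀ ≤ m₁ := fun h => hm01 (hm₀ m₁ h).symm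
  have h1le0 : ¬ m₁ ≤ m₀ := fun h => hm01 (hm₁ m₀ h)
  exact (noZ_of hZ hym₀' (hx m₀ hm₀) (hx m₁ hm₁) hyx hxy hym hmy h0le1 h1le0).elim

end Aux2

/-- A connected finite `Z`-free poset with more than one element decomposes as the
join of the elements strictly below every maximal element and the rest. -/
theorem connected_noZ_join_decomposition {α : Type} [Fintype α] [PartialOrder α]
    (hconn : PosetConnected α) (hZ : NoZFullEmbedding α) (hcard : 1 < Fintype.card α)
    (Pbot : Set α) (hPbot : Pbot = {x | ∀ m : α, (∀ y, m ≤ y → y = m) → x < m})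
    (Ptop : Set α) (hPtop : Ptop = Pbotᶜ) :
    Pbot.Nonempty ∧ Ptop.Nonempty ∧
      ∃ e : α ≃o Join ↥Pbot ↥Ptop,
        (∀ (x : α) (hx : x ∈ Pbot), e x = Join.mk (Sum.inl ⟨x, hx⟩)) ∧
        (∀ (x : α) (hx : x ∈ Ptop), e x = Join.mk (Sum.inr ⟨x, hx⟩)) := by
  classical
  subst hPtop; subst hPbot
  set Pbot : Set α := {x | ∀ m : α, (∀ y, m ≤ y → y = m) → x < m} with hPbot
  have hmem : ∀ x : α, x ∈ Pbot ↔ ∀ m, Mx m → x < m := fun x => Iff.rfl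
  have hmemc : ∀ x : α, x ∈ Pbotᶜ ↔ ¬ ∀ m, Mx m → x < m := fun x => Iff.rfl
  obtain ⟨x₀, hx₀⟩ := pbot_nonempty_of hconn hZ hcard
  obtain ⟨m₀, _, hm₀⟩ := exists_mx_ge x₀
  have hm₀mem : m₀ ∈ Pbotᶜ := by
    rw [hmemc]
    intro h
    exact lt_irrefl m₀ (h m₀ hm₀)
  have down : ∀ {x y : α}, x ≤ y → (∀ m, Mx m → y < m) → ∀ m, Mx m → x < m :=
    fun hxy hy m hm => lt_of_le_of_lt hxy (hy m hm)
  refine ⟨⟨x₀, (hmem x₀).mpr hx₀⟩, ⟨m₀, hm₀mem⟩, ?_⟩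
  let f : α → Join ↥Pbot ↥Pbotᶜ := fun x =>
    if h : ∀ m, Mx m → x < m then Join.mk (Sum.inl ⟨x, (hmem x).mpr h⟩)
    else Join.mk (Sum.inr ⟨x, (hmemc x).mpr h⟩)
  have fpos : ∀ (x : α) (h : ∀ m, Mx m → x < m), f x = Join.mk (Sum.inl ⟨x, h⟩) :=
    fun x h => dif_pos h
  have fneg : ∀ (x : α) (h : ¬ ∀ m, Mx m → x < m), f x = Join.mk (Sum.inr ⟨x, h⟩) :=
    fun x h => dif_neg h
  refine ⟨⟨⟨f, Sum.elim Subtype.val Subtype.val, ?_, ?_⟩, ?_⟩, ?_, ?_⟩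
  · intro x
    by_cases h : ∀ m, Mx m → x < m
    · rw [fpos x h]; rfl
    · rw [fneg x h]; rfl
  · rintro (⟨a, ha⟩ | ⟨a, ha⟩)
    · show f a = Join.mk (Sum.inl ⟨a, ha⟩)
      exact fpos a ((hmem a).mp ha)
    · show f a = Join.mk (Sum.inr ⟨a, ha⟩)
      exact fneg a ((hmemc a).mp ha)
  · intro a b
    show f a ≤ f b ↔ a ≤ b
    by_cases ha : ∀ m, Mx m → a < m <;> by_cases hb : ∀ m, Mx m → b < m
    · rw [fpos a ha, fpos b hb]; exact Iff.rfl
    · rw [fpos a ha, fneg b hb]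
      exact iff_of_true True.intro (pbot_le_ptop_of hconn hZ ha hb).le
    · rw [fneg a ha, fpos b hb]
      exact iff_of_false (fun h => h.elim) (fun hle => ha (down hle hb))
    · rw [fneg a ha, fneg b hb]; exact Iff.rfl
  · intro x hx
    show f x = Join.mk (Sum.inl ⟨x, hx⟩)
    exact fpos x ((hmem x).mp hx)
  · intro x hx
    show f x = Join.mk (Sum.inr ⟨x, hx⟩)
    exact fneg x ((hmemc x).mp hx)
end

section
/- Expressible posets are closed under lexicographic substitution: if P is an expressible poset on {1,...,n} and P_1,...,P_n are expressible posets, then P ∘ (P_1,...,P_n) is expressible. -/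
open scoped NNReal

section AuxSubst

/-- `(SubstOrder P Q).le` is the lexicographic relation. -/
theorem substOrder_le_iff {ι : Type} (P : PartialOrder ι) {β : ι → Type}
    (Q : ∀ i, PartialOrder (β i)) (a b : Σ i, β i) :
    (SubstOrder P Q).le a b ↔ Sigma.Lex P.lt (fun i => (Q i).le) a b := Iff.rfl

/-- Sigma over a unique index. -/
def sigmaOfUnique {ι : Type} [Unique ι] (β : ι → Type) : β default ≃ Σ i, β i where
  toFun x := ⟨default, x⟩
  invFun p := (Unique.eq_default p.1).symm ▸ p.2
  left_inv x := rfl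
  right_inv p := by rcases p with ⟨i, x⟩; cases Unique.eq_default i; rfl

/-- Sigma over a sum index. -/
def sigmaOfSum {A B : Type} (β : A ⊕ B → Type) :
    (Σ a, β (Sum.inl a)) ⊕ (Σ b, β (Sum.inr b)) ≃ Σ x, β x where
  toFun := Sum.elim (fun p => ⟨.inl p.1, p.2⟩) (fun p => ⟨.inr p.1, p.2⟩)
  invFun := fun p => match p with
    | ⟨.inl a, y⟩ => .inl ⟨a, y⟩
    | ⟨.inr b, y⟩ => .inr ⟨b, y⟩
  left_inv := by rintro (⟨a, y⟩ | ⟨b, y⟩) <;> rfl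
  right_inv := by rintro ⟨(a | b), y⟩ <;> rfl

end AuxSubst

theorem expressible_subst_general {ι : Type} (P : PartialOrder ι) (hP : Expressible ι P) :
    ∀ {β : ι → Type} (Q : ∀ i, PartialOrder (β i)),
      (∀ i, Expressible (β i) (Q i)) → Expressible (Σ i, β i) (SubstOrder P Q) := by
  induction hP with
  | empty α o =>
    intro β Q hQ
    haveI : IsEmpty (Σ i, β i) := ⟨fun x => IsEmpty.elim ‹_› x.1⟩
    exact Expressible.empty _ _
  | single α o =>
    intro β Q hQ
    refine Expressible.iso (Q default) _ (sigmaOfUnique β) ?_ (hQ default)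
    intro x y
    rw [substOrder_le_iff, Sigma.lex_iff]
    constructor
    · intro h; exact Or.inr ⟨rfl, h⟩
    · rintro (h | ⟨h, h'⟩)
      · exact absurd h fun hh =>
          ((o.lt_iff_le_not_ge _ _).1 hh).2 ((o.lt_iff_le_not_ge _ _).1 hh).1
      · exact h'
  | @disj A B oa ob hA hB ihA ihB =>
    intro β Q hQ
    refine Expressible.iso _ _ (sigmaOfSum β) ?_
      (@Expressible.disj _ _ (SubstOrder oa fun a => Q (.inl a))
        (SubstOrder ob fun b => Q (.inr b))
        (ihA _ (fun a => hQ _)) (ihB _ (fun b => hQ _)))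
    rintro (⟨a, x⟩ | ⟨b, x⟩) (⟨a', x'⟩ | ⟨b', x'⟩) <;> constructor <;> intro h
    · -- inl ≤ inl → lex
      replace h : Sigma.Lex oa.lt (fun a => (Q (.inl a)).le) ⟨a, x⟩ ⟨a', x'⟩ := by
        cases h with | inl h => exact h
      cases h with
      | left _ _ h => exact Sigma.Lex.left _ _ (Sum.LiftRel.inl h)
      | right _ _ h => exact Sigma.Lex.right _ _ h
    · -- lex → inl ≤ inl
      refine Sum.LiftRel.inl ?_
      rw [substOrder_le_iff, Sigma.lex_iff] at h ⊢
      rcases h with h | ⟨h, h'⟩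
      · cases h with | inl h => exact Or.inl h
      · obtain rfl : a = a' := by injection h
        exact Or.inr ⟨rfl, h'⟩
    · exact absurd h (by rintro ⟨⟩)
    · exact absurd h (by rintro (⟨_,_,h⟩ | ⟨_,_,h⟩) <;> cases h)
    · exact absurd h (by rintro ⟨⟩)
    · exact absurd h (by rintro (⟨_,_,h⟩ | ⟨_,_,h⟩) <;> cases h)
    · replace h : Sigma.Lex ob.lt (fun b => (Q (.inr b)).le) ⟨b, x⟩ ⟨b', x'⟩ := by
        cases h with | inr h => exact h
      cases h with
      | left _ _ h => exact Sigma.Lex.left _ _ (Sum.LiftRel.inr h)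
      | right _ _ h => exact Sigma.Lex.right _ _ h
    · refine Sum.LiftRel.inr ?_
      rw [substOrder_le_iff, Sigma.lex_iff] at h ⊢
      rcases h with h | ⟨h, h'⟩
      · cases h with | inr h => exact Or.inl h
      · obtain rfl : b = b' := by injection h
        exact Or.inr ⟨rfl, h'⟩
  | @join A B oa ob hA hB ihA ihB =>
    intro β Q hQ
    refine Expressible.iso _ _ (sigmaOfSum β) ?_
      (@Expressible.join _ _ (SubstOrder oa fun a => Q (.inl a))
        (SubstOrder ob fun b => Q (.inr b))
        (ihA _ (fun a => hQ _)) (ihB _ (fun b => hQ _)))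
    rintro (⟨a, x⟩ | ⟨b, x⟩) (⟨a', x'⟩ | ⟨b', x'⟩) <;> constructor <;> intro h
    · -- joinLE inl inl → lex
      replace h : Sigma.Lex oa.lt (fun a => (Q (.inl a)).le) ⟨a, x⟩ ⟨a', x'⟩ := h
      cases h with
      | left _ _ h =>
        refine Sigma.Lex.left _ _ ⟨?_, ?_⟩
        · exact ((oa.lt_iff_le_not_ge _ _).1 h).1
        · exact ((oa.lt_iff_le_not_ge _ _).1 h).2
      | right _ _ h => exact Sigma.Lex.right _ _ h
    · -- lex → joinLE inl inl
      replace h : Sigma.Lex Join.instPartialOrder.lt (fun i => (Q i).le)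
          ⟨Sum.inl a, x⟩ ⟨Sum.inl a', x'⟩ := h
      show Sigma.Lex oa.lt (fun a => (Q (.inl a)).le) ⟨a, x⟩ ⟨a', x'⟩
      rw [Sigma.lex_iff] at h
      rw [Sigma.lex_iff]
      rcases h with hl | ⟨h, h'⟩
      · exact Or.inl ((oa.lt_iff_le_not_ge _ _).2 ⟨hl.1, hl.2⟩)
      · have ha : a = a' := by injection h
        subst ha
        exact Or.inr ⟨rfl, h'⟩
    · -- joinLE inl inr (True) → lex
      exact Sigma.Lex.left _ _ ⟨trivial, fun f => f⟩
    · exact trivial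
    · exact absurd h (by exact fun f => f)
    · exfalso
      replace h : Sigma.Lex Join.instPartialOrder.lt (fun i => (Q i).le)
          ⟨Sum.inr b, x⟩ ⟨Sum.inl a', x'⟩ := h
      rw [Sigma.lex_iff] at h
      rcases h with hl | ⟨h, -⟩
      · exact hl.1
      · exact absurd h (by simp)
    · replace h : Sigma.Lex ob.lt (fun b => (Q (.inr b)).le) ⟨b, x⟩ ⟨b', x'⟩ := h
      cases h with
      | left _ _ h =>
        refine Sigma.Lex.left _ _ ⟨?_, ?_⟩
        · exact ((ob.lt_iff_le_not_ge _ _).1 h).1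
        · exact ((ob.lt_iff_le_not_ge _ _).1 h).2
      | right _ _ h => exact Sigma.Lex.right _ _ h
    · replace h : Sigma.Lex Join.instPartialOrder.lt (fun i => (Q i).le)
          ⟨Sum.inr b, x⟩ ⟨Sum.inr b', x'⟩ := h
      show Sigma.Lex ob.lt (fun b => (Q (.inr b)).le) ⟨b, x⟩ ⟨b', x'⟩
      rw [Sigma.lex_iff] at h
      rw [Sigma.lex_iff]
      rcases h with hl | ⟨h, h'⟩
      · exact Or.inl ((ob.lt_iff_le_not_ge _ _).2 ⟨hl.1, hl.2⟩)
      · have ha : b = b' := by injection h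
        subst ha
        exact Or.inr ⟨rfl, h'⟩
  | @iso A B oa ob e he hA ih =>
    intro β Q hQ
    refine Expressible.iso (SubstOrder oa fun a => Q (e a)) _
      (Equiv.sigmaCongrLeft e) ?_ (ih _ (fun a => hQ (e a)))
    rintro ⟨a, x⟩ ⟨a', x'⟩
    have hlt : ∀ u v, oa.lt u v ↔ ob.lt (e u) (e v) := by
      intro u v
      rw [oa.lt_iff_le_not_ge, ob.lt_iff_le_not_ge, he, he]
    rw [substOrder_le_iff, substOrder_le_iff, Sigma.lex_iff, Sigma.lex_iff]
    show (oa.lt a a' ∨ _) ↔ (ob.lt (e a) (e a') ∨ _)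
    constructor
    · rintro (h | he')
      · exact Or.inl ((hlt _ _).1 h)
      · obtain ⟨h, h'⟩ := he'
        have ha : a = a' := h
        subst ha
        exact Or.inr ⟨rfl, h'⟩
    · rintro (h | he')
      · exact Or.inl ((hlt _ _).2 h)
      · obtain ⟨h, h'⟩ := he'
        have ha : a = a' := e.injective h
        subst ha
        exact Or.inr ⟨rfl, h'⟩

/-- Expressible posets are closed under lexicographic substitution. -/
theorem expressible_substOrder {n : ℕ} (P : PartialOrder (Fin n)) {β : Fin n → Type}
    (Q : ∀ i, PartialOrder (β i)) (hP : Expressible (Fin n) P)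
    (hQ : ∀ i, Expressible (β i) (Q i)) :
    Expressible (Σ i, β i) (SubstOrder P Q) :=
  expressible_subst_general P hP Q hQ
end
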